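/- In the free unital associative ring ℤ⟨X⟩, for all elements a₁,...,a₅, the element 3·[a₁,a₂,a₃][a₄,a₅] lies in the ideal T⁽⁴⁾. -/
import Mathlib

noncomputable section

/-- `ℤ⟨X⟩`, the free unital associative ring on a countable set `X = {x₀, x₁, …}`. -/
abbrev R : Type := FreeAlgebra ℤ ℕ

/-- The commutator `[a,b] = ab - ba`. -/
def br (a b : R) : R := a * b - b * a

/-- `T⁽⁴⁾`: the two-sided ideal generated by all left-normed commutators of length 4. -/
def T4 : TwoSidedIdeal R := TwoSidedIdeal.span {y | ∃ a b c d : R, y = br (br (br a b) c) d}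

lemma gen4 (a b c d : R) : br (br (br a b) c) d ∈ T4 :=
  TwoSidedIdeal.subset_span ⟨a, b, c, d, rfl⟩

theorem stmt3 (a₁ a₂ a₃ a₄ a₅ : R) :
    (3 : ℤ) • (br (br a₁ a₂) a₃ * br a₄ a₅) ∈ T4 := by
  have key : (3 : ℤ) • (br (br a₁ a₂) a₃ * br a₄ a₅) =
      ((1 : ℤ) • ((br (br (br (a₁) (a₂)) (a₃)) (a₄)) * a₅)) +
      ((-1 : ℤ) • (a₅ * (br (br (br (a₁) (a₂)) (a₄)) (a₃)))) +
      ((2 : ℤ) • ((br (br (br (a₁) (a₂)) (a₄)) (a₃)) * a₅)) +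
      ((-1 : ℤ) • ((br (br (br (a₁) (a₂)) (a₄)) (a₅)) * a₃)) +
      ((2 : ℤ) • (a₄ * (br (br (br (a₁) (a₂)) (a₅)) (a₃)))) +
      ((-3 : ℤ) • ((br (br (br (a₁) (a₂)) (a₅)) (a₃)) * a₄)) +
      ((3 : ℤ) • ((br (br (br (a₁) (a₂)) (a₅)) (a₄)) * a₃)) +
      ((-1 : ℤ) • ((br (br (br (a₁) (a₃)) (a₂)) (a₄)) * a₅)) +
      ((1 : ℤ) • (a₄ * (br (br (br (a₁) (a₃)) (a₂)) (a₅)))) +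
      ((-1 : ℤ) • ((br (br (br (a₁) (a₃)) (a₂)) (a₅)) * a₄)) +
      ((-1 : ℤ) • (a₅ * (br (br (br (a₁) (a₃)) (a₄)) (a₂)))) +
      ((1 : ℤ) • ((br (br (br (a₁) (a₃)) (a₄)) (a₂)) * a₅)) +
      ((-1 : ℤ) • ((br (br (br (a₁) (a₃)) (a₄)) (a₅)) * a₂)) +
      ((1 : ℤ) • (a₄ * (br (br (br (a₁) (a₃)) (a₅)) (a₂)))) +
      ((-2 : ℤ) • ((br (br (br (a₁) (a₃)) (a₅)) (a₂)) * a₄)) +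
      ((1 : ℤ) • (a₅ * (br (br (br (a₁) (a₄)) (a₂)) (a₃)))) +
      ((-2 : ℤ) • ((br (br (br (a₁) (a₄)) (a₂)) (a₃)) * a₅)) +
      ((-1 : ℤ) • (a₃ * (br (br (br (a₁) (a₄)) (a₂)) (a₅)))) +
      ((-1 : ℤ) • ((br (br (br (a₁) (a₄)) (a₂)) (a₅)) * a₃)) +
      ((1 : ℤ) • (a₅ * (br (br (br (a₁) (a₄)) (a₃)) (a₂)))) +
      ((-1 : ℤ) • ((br (br (br (a₁) (a₄)) (a₃)) (a₂)) * a₅)) +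
      ((-1 : ℤ) • (a₂ * (br (br (br (a₁) (a₄)) (a₃)) (a₅)))) +
      ((2 : ℤ) • ((br (br (br (a₁) (a₄)) (a₃)) (a₅)) * a₂)) +
      ((-1 : ℤ) • (a₃ * (br (br (br (a₁) (a₄)) (a₅)) (a₂)))) +
      ((2 : ℤ) • ((br (br (br (a₁) (a₄)) (a₅)) (a₂)) * a₃)) +
      ((-2 : ℤ) • ((br (br (br (a₁) (a₄)) (a₅)) (a₃)) * a₂)) +
      ((-1 : ℤ) • (a₄ * (br (br (br (a₁) (a₅)) (a₂)) (a₃)))) +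
      ((1 : ℤ) • ((br (br (br (a₁) (a₅)) (a₂)) (a₃)) * a₄)) +
      ((1 : ℤ) • (a₃ * (br (br (br (a₁) (a₅)) (a₂)) (a₄)))) +
      ((-3 : ℤ) • ((br (br (br (a₁) (a₅)) (a₂)) (a₄)) * a₃)) +
      ((-2 : ℤ) • (a₄ * (br (br (br (a₁) (a₅)) (a₃)) (a₂)))) +
      ((2 : ℤ) • ((br (br (br (a₁) (a₅)) (a₃)) (a₂)) * a₄)) +
      ((-1 : ℤ) • ((br (br (br (a₁) (a₅)) (a₃)) (a₄)) * a₂)) +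
      ((1 : ℤ) • ((br (br (br (a₁) (a₅)) (a₄)) (a₃)) * a₂)) +
      ((1 : ℤ) • (a₁ * (br (br (br (a₂) (a₃)) (a₄)) (a₅)))) +
      ((-2 : ℤ) • (a₁ * (br (br (br (a₂) (a₃)) (a₅)) (a₄)))) +
      ((-1 : ℤ) • (a₁ * (br (br (br (a₂) (a₄)) (a₃)) (a₅)))) +
      ((2 : ℤ) • (a₁ * (br (br (br (a₂) (a₅)) (a₃)) (a₄)))) +
      ((-2 : ℤ) • (a₁ * (br (br (br (a₂) (a₅)) (a₄)) (a₃)))) +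
      ((1 : ℤ) • (br (br (br (a₁) (a₂)) (a₃ * a₄)) (a₅))) +
      ((2 : ℤ) • (br (br (br (a₁ * a₂) (a₃)) (a₅)) (a₄))) +
      ((-1 : ℤ) • (br (br (br (a₁) (a₂ * a₃)) (a₅)) (a₄))) +
      ((-2 : ℤ) • (br (br (br (a₁) (a₂)) (a₃ * a₅)) (a₄))) +
      ((-1 : ℤ) • (br (br (br (a₁) (a₂ * a₄)) (a₃)) (a₅))) +
      ((1 : ℤ) • (br (br (br (a₁) (a₂ * a₄)) (a₅)) (a₃))) +
      ((1 : ℤ) • (br (br (br (a₁) (a₂ * a₅)) (a₃)) (a₄))) +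
      ((-1 : ℤ) • (br (br (br (a₁) (a₂ * a₅)) (a₄)) (a₃))) +
      ((1 : ℤ) • (br (br (br (a₁) (a₃)) (a₂ * a₄)) (a₅))) +
      ((-1 : ℤ) • (br (br (br (a₁) (a₃)) (a₂ * a₅)) (a₄))) +
      ((3 : ℤ) • (br (br (br (a₁ * a₃) (a₄)) (a₂)) (a₅))) +
      ((-1 : ℤ) • (br (br (br (a₁) (a₃ * a₄)) (a₂)) (a₅))) +
      ((-2 : ℤ) • (br (br (br (a₁ * a₃) (a₄)) (a₅)) (a₂))) +
      ((1 : ℤ) • (br (br (br (a₁) (a₃ * a₄)) (a₅)) (a₂))) +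
      ((2 : ℤ) • (br (br (br (a₁) (a₃ * a₅)) (a₂)) (a₄))) +
      ((1 : ℤ) • (br (br (br (a₁) (a₄)) (a₂ * a₅)) (a₃))) := by
    simp only [br, zsmul_eq_mul]
    push_cast
    noncomm_ring
  rw [key]
  exact add_mem (add_mem (add_mem (add_mem (add_mem (add_mem (add_mem (add_mem (add_mem (add_mem (add_mem (add_mem (add_mem (add_mem (add_mem (add_mem (add_mem (add_mem (add_mem (add_mem (add_mem (add_mem (add_mem (add_mem (add_mem (add_mem (add_mem (add_mem (add_mem (add_mem (add_mem (add_mem (add_mem (add_mem (add_mem (add_mem (add_mem (add_mem (add_mem (add_mem (add_mem (add_mem (add_mem (add_mem (add_mem (add_mem (add_mem (add_mem (add_mem (add_mem (add_mem (add_mem (add_mem (add_mem (T4.zsmul_mem (1 : ℤ) (T4.mul_mem_right _ _ (gen4 _ _ _ _))) (T4.zsmul_mem (-1 : ℤ) (T4.mul_mem_left _ _ (gen4 _ _ _ _)))) (T4.zsmul_mem (2 : ℤ) (T4.mul_mem_right _ _ (gen4 _ _ _ _)))) (T4.zsmul_mem (-1 : ℤ) (T4.mul_mem_right _ _ (gen4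 _ _ _ _)))) (T4.zsmul_mem (2 : ℤ) (T4.mul_mem_left _ _ (gen4 _ _ _ _)))) (T4.zsmul_mem (-3 : ℤ) (T4.mul_mem_right _ _ (gen4 _ _ _ _)))) (T4.zsmul_mem (3 : ℤ) (T4.mul_mem_right _ _ (gen4 _ _ _ _)))) (T4.zsmul_mem (-1 : ℤ) (T4.mul_mem_right _ _ (gen4 _ _ _ _)))) (T4.zsmul_mem (1 : ℤ) (T4.mul_mem_left _ _ (gen4 _ _ _ _)))) (T4.zsmul_mem (-1 : ℤ) (T4.mul_mem_right _ _ (gen4 _ _ _ _)))) (T4.zsmul_mem (-1 : ℤ) (T4.mul_mem_left _ _ (gen4 _ _ _ _)))) (T4.zsmul_mem (1 : ℤ) (T4.mul_mem_right _ _ (gen4 _ _ _ _)))) (T4.zsmul_mem (-1 : ℤ) (T4.mul_mem_right _ _ (gen4 _ _ _ _)))) (T4.zsmul_mem (1 : ℤ) (T4.mul_mem_left _ _ (gen4 _ _ _ _)))) (T4.zsmul_mem (-2 : ℤ) (T4.mul_mem_right _ _ (gen4 _ _ _ _)))) (T4.zsmul_mem (1 : ℤ) (T4.mul_mem_left _ _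 (gen4 _ _ _ _)))) (T4.zsmul_mem (-2 : ℤ) (T4.mul_mem_right _ _ (gen4 _ _ _ _)))) (T4.zsmul_mem (-1 : ℤ) (T4.mul_mem_left _ _ (gen4 _ _ _ _)))) (T4.zsmul_mem (-1 : ℤ) (T4.mul_mem_right _ _ (gen4 _ _ _ _)))) (T4.zsmul_mem (1 : ℤ) (T4.mul_mem_left _ _ (gen4 _ _ _ _)))) (T4.zsmul_mem (-1 : ℤ) (T4.mul_mem_right _ _ (gen4 _ _ _ _)))) (T4.zsmul_mem (-1 : ℤ) (T4.mul_mem_left _ _ (gen4 _ _ _ _)))) (T4.zsmul_mem (2 : ℤ) (T4.mul_mem_right _ _ (gen4 _ _ _ _)))) (T4.zsmul_mem (-1 : ℤ) (T4.mul_mem_left _ _ (gen4 _ _ _ _)))) (T4.zsmul_mem (2 : ℤ) (T4.mul_mem_right _ _ (gen4 _ _ _ _)))) (T4.zsmul_mem (-2 : ℤ) (T4.mul_mem_right _ _ (gen4 _ _ _ _)))) (T4.zsmul_mem (-1 : ℤ) (T4.mul_mem_left _ _ (gen4 _ _ _ _)))) (T4.zsmul_mem (1 : ℤ) (T4.mul_mem_right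 _ _ (gen4 _ _ _ _)))) (T4.zsmul_mem (1 : ℤ) (T4.mul_mem_left _ _ (gen4 _ _ _ _)))) (T4.zsmul_mem (-3 : ℤ) (T4.mul_mem_right _ _ (gen4 _ _ _ _)))) (T4.zsmul_mem (-2 : ℤ) (T4.mul_mem_left _ _ (gen4 _ _ _ _)))) (T4.zsmul_mem (2 : ℤ) (T4.mul_mem_right _ _ (gen4 _ _ _ _)))) (T4.zsmul_mem (-1 : ℤ) (T4.mul_mem_right _ _ (gen4 _ _ _ _)))) (T4.zsmul_mem (1 : ℤ) (T4.mul_mem_right _ _ (gen4 _ _ _ _)))) (T4.zsmul_mem (1 : ℤ) (T4.mul_mem_left _ _ (gen4 _ _ _ _)))) (T4.zsmul_mem (-2 : ℤ) (T4.mul_mem_left _ _ (gen4 _ _ _ _)))) (T4.zsmul_mem (-1 : ℤ) (T4.mul_mem_left _ _ (gen4 _ _ _ _)))) (T4.zsmul_mem (2 : ℤ) (T4.mul_mem_left _ _ (gen4 _ _ _ _)))) (T4.zsmul_mem (-2 : ℤ) (T4.mul_mem_left _ _ (gen4 _ _ _ _)))) (T4.zsmul_mem (1 : ℤ) (gen4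 _ _ _ _))) (T4.zsmul_mem (2 : ℤ) (gen4 _ _ _ _))) (T4.zsmul_mem (-1 : ℤ) (gen4 _ _ _ _))) (T4.zsmul_mem (-2 : ℤ) (gen4 _ _ _ _))) (T4.zsmul_mem (-1 : ℤ) (gen4 _ _ _ _))) (T4.zsmul_mem (1 : ℤ) (gen4 _ _ _ _))) (T4.zsmul_mem (1 : ℤ) (gen4 _ _ _ _))) (T4.zsmul_mem (-1 : ℤ) (gen4 _ _ _ _))) (T4.zsmul_mem (1 : ℤ) (gen4 _ _ _ _))) (T4.zsmul_mem (-1 : ℤ) (gen4 _ _ _ _))) (T4.zsmul_mem (3 : ℤ) (gen4 _ _ _ _))) (T4.zsmul_mem (-1 : ℤ) (gen4 _ _ _ _))) (T4.zsmul_mem (-2 : ℤ) (gen4 _ _ _ _))) (T4.zsmul_mem (1 : ℤ) (gen4 _ _ _ _))) (T4.zsmul_mem (2 : ℤ) (gen4 _ _ _ _))) (T4.zsmul_mem (1 : ℤ) (gen4 _ _ _ _))
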